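/- Let d ≥ 2 and let a_1, …, a_d be positive integers with gcd(a_i, a_j) = 1 for all i ≠ j. Let T(x) denote the number of tuples (x_1, …, x_d) ∈ ℕ^d with x_1·a_1 + … + x_d·a_d = x, and set P = a_1·a_2·⋯·a_d. Then there exists a real constant C (depending only on a_1, …, a_d) such that for all natural numbers x, |T(x) − (P^{d-2}/(d−1)!)·⌊x/P⌋^{d-1}| ≤ C·(x + 1)^{d-2}. -/

import Mathlib

open Finset


lemma prod_est (q e : ℝ) (hq : 0 ≤ q) (he : 0 ≤ e) (b : ℕ → ℝ) (hb : ∀ t, |b t - q| ≤ e) :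
    ∀ k : ℕ, |(∏ t ∈ Finset.range (k+1), b t) - q ^ (k+1)| ≤ (k+1) * e * (q + e) ^ k := by
  have hble : ∀ t, |b t| ≤ q + e := by
    intro t
    calc |b t| = |q + (b t - q)| := by ring_nf
    _ ≤ |q| + |b t - q| := abs_add_le _ _
    _ ≤ q + e := by rw [abs_of_nonneg hq]; linarith [hb t]
  have hqe : (0:ℝ) ≤ q + e := by linarith
  intro k
  induction k with
  | zero => simpa using hb 0
  | succ k ih =>
    rw [Finset.prod_range_succ]
    have key : (∏ t ∈ Finset.range (k+1), b t) * b (k+1) - q ^ (k+1+1)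
        = b (k+1) * ((∏ t ∈ Finset.range (k+1), b t) - q ^ (k+1)) + (b (k+1) - q) * q ^ (k+1) := by
      ring
    rw [key]
    calc |b (k+1) * ((∏ t ∈ Finset.range (k+1), b t) - q ^ (k+1)) + (b (k+1) - q) * q ^ (k+1)|
        ≤ |b (k+1)| * |(∏ t ∈ Finset.range (k+1), b t) - q ^ (k+1)| + |b (k+1) - q| * q ^ (k+1) := by
          refine (abs_add_le _ _).trans ?_
          rw [abs_mul, abs_mul, abs_of_nonneg (pow_nonneg hq _)]
      _ ≤ (q + e) * ((k+1) * e * (q + e) ^ k) + e * (q + e) ^ (k+1) := by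
          refine add_le_add (mul_le_mul (hble _) ih (abs_nonneg _) hqe)
            (mul_le_mul (hb _) (pow_le_pow_left₀ hq (by linarith) _) (pow_nonneg hq _) he)
      _ = (↑(k+1) + 1) * e * (q + e) ^ (k+1) := by push_cast; ring

lemma asc_prod (n k : ℕ) : n.ascFactorial k = ∏ t ∈ Finset.range k, (n + t) := by
  induction k with
  | zero => simp
  | succ k ih => rw [Finset.prod_range_succ, Nat.ascFactorial_succ, ← ih, Nat.mul_comm]

lemma card_comp (d m : ℕ) :
    (Finset.Nat.antidiagonalTuple d m).card = (d + m - 1).choose m := by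
  classical
  have hE : ∀ f : Fin d → ℕ,
      Multiset.card (Finsupp.toMultiset (Finsupp.equivFunOnFinite.symm f)) = ∑ i, f i := by
    intro f
    rw [Finsupp.card_toMultiset, Finsupp.sum_fintype _ _ (fun _ => rfl)]
    simp
  have E' : {x // x ∈ Finset.Nat.antidiagonalTuple d m} ≃ Sym (Fin d) m :=
    { toFun := fun x => ⟨Finsupp.toMultiset (Finsupp.equivFunOnFinite.symm x.1), by
        rw [hE]; exact Finset.Nat.mem_antidiagonalTuple.mp x.2⟩
      invFun := fun s => ⟨Finsupp.equivFunOnFinite (Multiset.toFinsupp s.1), by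
        rw [Finset.Nat.mem_antidiagonalTuple, ← hE]
        simp [s.2]⟩
      left_inv := fun x => by
        ext i
        simp
      right_inv := fun s => by
        ext
        simp }
  have := Fintype.card_congr E'
  rw [Fintype.card_coe] at this
  rw [this, Sym.card_sym_eq_choose, Fintype.card_fin]

lemma fiber_card (d : ℕ) (hd : 2 ≤ d) (a b : Fin d → ℕ) (P : ℕ)
    (hPpos : 0 < P) (hab : ∀ i, a i * b i = P)
    (hcop01 : Nat.Coprime (a ⟨0, by omega⟩) (a ⟨1, by omega⟩))
    (hbprod : ∏ i, b i = P ^ (d - 1)) (r : ℕ) :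
    ((Fintype.piFinset fun i => Finset.range (b i)).filter
        (fun y => (∑ i, y i * a i) % P = r % P)).card = P ^ (d - 2) := by
  classical
  haveI : NeZero P := ⟨hPpos.ne'⟩
  have hbpos : ∀ i, 0 < b i := by
    intro i
    rcases Nat.eq_zero_or_pos (b i) with h | h
    · exfalso; have := hab i; rw [h, Nat.mul_zero] at this; omega
    · exact h
  haveI : ∀ i, NeZero (b i) := fun i => ⟨(hbpos i).ne'⟩
  -- the component homs
  have hcond : ∀ i : Fin d, (zmultiplesHom (ZMod P) ((a i : ℕ) : ZMod P)) ((b i : ℕ) : ℤ) = 0 := by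
    intro i
    show ((b i : ℕ) : ℤ) • ((a i : ℕ) : ZMod P) = 0
    rw [zsmul_eq_mul]
    push_cast
    rw [← Nat.cast_mul, Nat.mul_comm, hab i, ZMod.natCast_self]
  set ψ : ∀ i : Fin d, ZMod (b i) →+ ZMod P :=
    fun i => ZMod.lift (b i) ⟨zmultiplesHom (ZMod P) ((a i : ℕ) : ZMod P), hcond i⟩ with hψdef
  have hψint : ∀ (i : Fin d) (u : ℤ), ψ i ((u : ℤ) : ZMod (b i)) = (u : ZMod P) * (a i : ZMod P) := by
    intro i u
    rw [hψdef]
    rw [ZMod.lift_coe]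
    show (u : ℤ) • ((a i : ℕ) : ZMod P) = _
    rw [zsmul_eq_mul]
  have hψnat : ∀ (i : Fin d) (n : ℕ), ψ i ((n : ℕ) : ZMod (b i)) = ((n * a i : ℕ) : ZMod P) := by
    intro i n
    have : ((n : ℕ) : ZMod (b i)) = ((n : ℤ) : ZMod (b i)) := by push_cast; rfl
    rw [this, hψint]
    push_cast
    ring
  set φ : (∀ i, ZMod (b i)) →+ ZMod P :=
    ∑ i, (ψ i).comp (Pi.evalAddMonoidHom (fun i => ZMod (b i)) i) with hφdef
  have hφ : ∀ g, φ g = ∑ i, ψ i (g i) := by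
    intro g
    rw [hφdef, AddMonoidHom.finset_sum_apply]
    rfl
  have hφsingle : ∀ (i : Fin d) (z : ZMod (b i)), φ (Pi.single i z) = ψ i z := by
    intro i z
    have hs : ∑ j, ψ j (Pi.single (M := fun i => ZMod (b i)) i z j)
        = ψ i (Pi.single (M := fun i => ZMod (b i)) i z i) :=
      Finset.sum_eq_single_of_mem
        (f := fun j => ψ j (Pi.single (M := fun i => ZMod (b i)) i z j)) i (Finset.mem_univ i)
        (fun j _ hj => by simp [Pi.single_eq_of_ne hj])
    rw [hφ, hs, Pi.single_eq_same]
  -- surjectivity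
  set i0 : Fin d := ⟨0, by omega⟩
  set i1 : Fin d := ⟨1, by omega⟩
  have hne : i0 ≠ i1 := by simp [i0, i1, Fin.ext_iff]
  set u : ℤ := Nat.gcdA (a i0) (a i1)
  set v : ℤ := Nat.gcdB (a i0) (a i1)
  set g1 : ∀ i, ZMod (b i) :=
    Pi.single i0 ((u : ZMod (b i0))) + Pi.single i1 ((v : ZMod (b i1))) with hg1def
  have hφg1 : φ g1 = 1 := by
    rw [hg1def, map_add, hφsingle, hφsingle, hψint, hψint]
    have hbez : ((1 : ℕ) : ℤ) = (a i0 : ℤ) * u + (a i1 : ℤ) * v := by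
      rw [← hcop01]
      exact Nat.gcd_eq_gcd_ab _ _
    have : ((1 : ℤ) : ZMod P) = ((a i0 : ℤ) * u + (a i1 : ℤ) * v : ℤ) := by
      rw [← hbez]; push_cast; ring
    push_cast at this ⊢
    linear_combination this.symm
  have surj : Function.Surjective φ := by
    intro t
    refine ⟨t.val • g1, ?_⟩
    rw [map_nsmul, hφg1, nsmul_eq_mul, mul_one, ZMod.natCast_val, ZMod.cast_id]
  -- all fibers have the same cardinality
  have hcard : ∀ t : ZMod P, Fintype.card {g // φ g = t} = Fintype.card {g // φ g = 0} := by
    intro t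
    obtain ⟨gt, hgt⟩ := surj t
    exact Fintype.card_congr
      { toFun := fun g => ⟨g.1 - gt, by rw [map_sub, g.2, hgt, sub_self]⟩
        invFun := fun g => ⟨g.1 + gt, by rw [map_add, g.2, hgt, zero_add]⟩
        left_inv := fun g => by simp
        right_inv := fun g => by simp }
  have htotal : P ^ (d - 1) = P * Fintype.card {g // φ g = 0} := by
    have h1 : Fintype.card (∀ i, ZMod (b i)) = P ^ (d - 1) := by
      rw [Fintype.card_pi]
      simp only [ZMod.card]
      exact hbprod
    have h2 : Fintype.card (∀ i, ZMod (b i)) = ∑ t : ZMod P, Fintype.card {g // φ g = t} := by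
      rw [Fintype.card_congr (Equiv.sigmaFiberEquiv φ).symm, Fintype.card_sigma]
    rw [← h1, h2]
    rw [Finset.sum_congr rfl (fun t _ => hcard t), Finset.sum_const, Finset.card_univ, ZMod.card,
      smul_eq_mul]
  have hfib0 : Fintype.card {g // φ g = 0} = P ^ (d - 2) := by
    have : P ^ (d - 1) = P * P ^ (d - 2) := by
      rw [← pow_succ']
      congr 1
      omega
    rw [this] at htotal
    exact (Nat.eq_of_mul_eq_mul_left hPpos htotal).symm
  have hfib : Fintype.card {g // φ g = ((r : ℕ) : ZMod P)} = P ^ (d - 2) := by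
    rw [hcard, hfib0]
  -- now exhibit the bijection between the box-filter and the fiber
  have hφcast : ∀ y : Fin d → ℕ, φ (fun i => ((y i : ℕ) : ZMod (b i))) = ((∑ i, y i * a i : ℕ) : ZMod P) := by
    intro y
    rw [hφ]
    push_cast
    refine Finset.sum_congr rfl (fun i _ => ?_)
    rw [hψnat]
    push_cast
    ring
  rw [← hfib, Fintype.card_subtype]
  refine Finset.card_bij' (fun y _ => fun i => ((y i : ℕ) : ZMod (b i)))
    (fun g _ => fun i => (g i).val) ?_ ?_ ?_ ?_
  · intro y hy
    rw [Finset.mem_filter] at hy ⊢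
    obtain ⟨hy1, hy2⟩ := hy
    refine ⟨Finset.mem_univ _, ?_⟩
    rw [hφcast]
    rw [ZMod.natCast_eq_natCast_iff']
    exact hy2
  · intro g hg
    rw [Finset.mem_filter] at hg
    rw [Finset.mem_filter]
    constructor
    · rw [Fintype.mem_piFinset]
      intro i
      rw [Finset.mem_range]
      exact ZMod.val_lt _
    · have : φ (fun i => (((g i).val : ℕ) : ZMod (b i))) = ((r : ℕ) : ZMod P) := by
        have : (fun i => (((g i).val : ℕ) : ZMod (b i))) = g := by
          funext i
          rw [ZMod.natCast_val, ZMod.cast_id]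
        rw [this]
        exact hg.2
      rw [hφcast] at this
      rwa [ZMod.natCast_eq_natCast_iff'] at this
  · intro y hy
    rw [Finset.mem_filter, Fintype.mem_piFinset] at hy
    funext i
    exact ZMod.val_cast_of_lt (Finset.mem_range.mp (hy.1 i))
  · intro g hg
    funext i
    show (((g i).val : ℕ) : ZMod (b i)) = g i
    rw [ZMod.natCast_val, ZMod.cast_id]

lemma count_decompose (d : ℕ) (hd : 1 ≤ d) (a b : Fin d → ℕ) (P : ℕ) (hPpos : 0 < P)
    (ha : ∀ i, 0 < a i) (hb : ∀ i, 0 < b i) (hab : ∀ i, a i * b i = P)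
    (x : ℕ) (hx : d * P ≤ x) :
    ((Fintype.piFinset fun _ : Fin d => Finset.range (x+1)).filter
        (fun f => ∑ i, f i * a i = x)).card
      = ∑ y ∈ (Fintype.piFinset fun i => Finset.range (b i)).filter
          (fun y => (∑ i, y i * a i) % P = x % P),
          (d + (x - ∑ i, y i * a i) / P - 1).choose ((x - ∑ i, y i * a i) / P) := by
  classical
  have hdecomp : ∀ f : Fin d → ℕ,
      ∑ i, f i * a i = P * (∑ i, f i / b i) + ∑ i, (f i % b i) * a i := by
    intro f
    rw [Finset.mul_sum, ← Finset.sum_add_distrib]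
    refine Finset.sum_congr rfl (fun i _ => ?_)
    conv_lhs => rw [← Nat.div_add_mod (f i) (b i), Nat.add_mul]
    congr 1
    rw [← hab i]
    ring
  rw [Finset.card_eq_sum_card_fiberwise
    (f := fun f => (fun i => f i % b i))
    (t := (Fintype.piFinset fun i => Finset.range (b i)).filter
          (fun y => (∑ i, y i * a i) % P = x % P))
    (by
      intro f hf
      rw [Finset.mem_coe, Finset.mem_filter] at hf
      rw [Finset.mem_coe, Finset.mem_filter, Fintype.mem_piFinset]
      refine ⟨fun i => Finset.mem_range.mpr (Nat.mod_lt _ (hb i)), ?_⟩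
      show (∑ i, (f i % b i) * a i) % P = x % P
      rw [← hf.2, hdecomp f, Nat.mul_add_mod]
      )]
  refine Finset.sum_congr rfl (fun y hy => ?_)
  rw [Finset.mem_filter, Fintype.mem_piFinset] at hy
  obtain ⟨hy1, hy2⟩ := hy
  have hylt : ∀ i, y i < b i := fun i => Finset.mem_range.mp (hy1 i)
  -- s y ≤ x
  have hsy : (∑ i, y i * a i) + d ≤ d * P := by
    have h1 : ∀ i ∈ Finset.univ, y i * a i + 1 ≤ b i * a i := by
      intro i _
      have : (y i + 1) * a i ≤ b i * a i :=
        Nat.mul_le_mul_right _ (hylt i)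
      calc y i * a i + 1 ≤ y i * a i + a i := by
            have := ha i; omega
        _ = (y i + 1) * a i := by ring
        _ ≤ b i * a i := this
    calc (∑ i, y i * a i) + d
        = ∑ i : Fin d, (y i * a i + 1) := by
          rw [Finset.sum_add_distrib]
          simp [Finset.card_univ]
      _ ≤ ∑ i : Fin d, b i * a i := Finset.sum_le_sum h1
      _ = ∑ i : Fin d, P := by
          refine Finset.sum_congr rfl (fun i _ => ?_)
          rw [← hab i]; ring
      _ = d * P := by simp [Finset.card_univ, Nat.smul_one_eq_cast]
  have hsyx : (∑ i, y i * a i) ≤ x := by omega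
  have hdvd : P ∣ x - ∑ i, y i * a i := (Nat.modEq_iff_dvd' hsyx).mp hy2
  set m := (x - ∑ i, y i * a i) / P with hm
  have hPm : P * m = x - ∑ i, y i * a i := Nat.mul_div_cancel' hdvd
  rw [← card_comp d m]
  refine Finset.card_bij' (fun f _ => fun i => f i / b i) (fun c _ => fun i => y i + b i * c i)
    ?_ ?_ ?_ ?_
  · -- maps into antidiagonalTuple
    intro f hf
    rw [Finset.mem_filter, Finset.mem_filter] at hf
    obtain ⟨⟨hf1, hf2⟩, hf3⟩ := hf
    rw [Finset.Nat.mem_antidiagonalTuple]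
    have hmod : ∀ i, f i % b i = y i := fun i => congrFun hf3 i
    have := hdecomp f
    rw [hf2] at this
    have hsum : (∑ i, (f i % b i) * a i) = ∑ i, y i * a i :=
      Finset.sum_congr rfl (fun i _ => by rw [hmod i])
    rw [hsum] at this
    have : P * (∑ i, f i / b i) = P * m := by omega
    exact Nat.eq_of_mul_eq_mul_left hPpos this
  · -- maps back into fiber
    intro c hc
    rw [Finset.Nat.mem_antidiagonalTuple] at hc
    have hsum : ∑ i, (y i + b i * c i) * a i = x := by
      have h1 : ∀ i, (y i + b i * c i) * a i = y i * a i + P * c i := by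
        intro i
        rw [Nat.add_mul]
        congr 1
        rw [← hab i]
        ring
      calc ∑ i, (y i + b i * c i) * a i = ∑ i, (y i * a i + P * c i) := by
            exact Finset.sum_congr rfl (fun i _ => h1 i)
        _ = (∑ i, y i * a i) + P * ∑ i, c i := by
            rw [Finset.sum_add_distrib, Finset.mul_sum]
        _ = (∑ i, y i * a i) + P * m := by rw [hc]
        _ = x := by omega
    rw [Finset.mem_filter, Finset.mem_filter]
    refine ⟨⟨?_, hsum⟩, ?_⟩
    · rw [Fintype.mem_piFinset]
      intro i
      rw [Finset.mem_range]
      have h2 : y i + b i * c i ≤ (y i + b i * c i) * a i :=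
        le_mul_of_one_le_right (Nat.zero_le _) (ha i)
      have h3 : (y i + b i * c i) * a i ≤ x := by
        rw [← hsum]
        exact Finset.single_le_sum (f := fun i => (y i + b i * c i) * a i)
          (fun i _ => Nat.zero_le _) (Finset.mem_univ i)
      exact Nat.lt_succ_of_le (h2.trans h3)
    · funext i
      rw [Nat.add_mul_mod_self_left, Nat.mod_eq_of_lt (hylt i)]
  · -- left inverse
    intro f hf
    rw [Finset.mem_filter] at hf
    have hmod : ∀ i, f i % b i = y i := fun i => congrFun hf.2 i
    funext i
    show y i + b i * (f i / b i) = f i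
    rw [← hmod i, Nat.mod_add_div]
  · -- right inverse
    intro c hc
    funext i
    show (y i + b i * c i) / b i = c i
    rw [Nat.add_mul_div_left _ _ (hb i), Nat.div_eq_of_lt (hylt i), Nat.zero_add]

lemma choose_est (k m q : ℕ) (hm : m ≤ q) (hqm : q ≤ m + k + 2) :
    |(((m + (k+1)).choose (k+1) : ℕ) : ℝ) - (q:ℝ)^(k+1) / (Nat.factorial (k+1))|
      ≤ ((k:ℝ)+1) * ((k:ℝ)+2) * ((q:ℝ) + ((k:ℝ)+2))^k := by
  have hfact : (1:ℝ) ≤ (Nat.factorial (k+1) : ℝ) := by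
    exact_mod_cast Nat.one_le_iff_ne_zero.mpr (Nat.factorial_ne_zero _)
  have hfactpos : (0:ℝ) < (Nat.factorial (k+1) : ℝ) := by linarith
  set b : ℕ → ℝ := fun t => ((m + 1 + min t k : ℕ) : ℝ) with hbdef
  have hm' : (m:ℝ) ≤ q := Nat.cast_le.mpr hm
  have hq' : (q:ℝ) ≤ (m:ℝ) + k + 2 := by exact_mod_cast Nat.cast_le.mpr hqm
  have hb : ∀ t, |b t - q| ≤ (k:ℝ) + 2 := by
    intro t
    have h1 : ((min t k : ℕ) : ℝ) ≤ k := Nat.cast_le.mpr (Nat.min_le_right t k)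
    have h2 : (0:ℝ) ≤ ((min t k : ℕ) : ℝ) := Nat.cast_nonneg _
    rw [hbdef, abs_le]
    push_cast at h1 h2 ⊢
    constructor <;> linarith
  have hprod : (((m+1).ascFactorial (k+1) : ℕ) : ℝ) = ∏ t ∈ Finset.range (k+1), b t := by
    rw [asc_prod, Nat.cast_prod]
    refine Finset.prod_congr rfl (fun t ht => ?_)
    rw [hbdef]
    congr 2
    exact (Nat.min_eq_left (Nat.lt_succ_iff.mp (Finset.mem_range.mp ht))).symm
  have hest := prod_est (q:ℝ) ((k:ℝ)+2) (Nat.cast_nonneg q) (by positivity) b hb k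
  rw [← hprod] at hest
  have hchoose : (((m+1).ascFactorial (k+1) : ℕ) : ℝ)
      = (Nat.factorial (k+1) : ℝ) * ((m + (k+1)).choose (k+1) : ℝ) := by
    rw [Nat.ascFactorial_eq_factorial_mul_choose]
    push_cast
    ring
  rw [hchoose] at hest
  have key : (((m + (k+1)).choose (k+1) : ℕ) : ℝ) - (q:ℝ)^(k+1) / (Nat.factorial (k+1))
      = ((Nat.factorial (k+1) : ℝ) * ((m + (k+1)).choose (k+1) : ℝ) - (q:ℝ)^(k+1))
        / (Nat.factorial (k+1)) := by
    field_simp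
  rw [key, abs_div, abs_of_pos hfactpos]
  calc |(Nat.factorial (k+1) : ℝ) * ((m + (k+1)).choose (k+1) : ℝ) - (q:ℝ)^(k+1)|
        / (Nat.factorial (k+1) : ℝ)
      ≤ |(Nat.factorial (k+1) : ℝ) * ((m + (k+1)).choose (k+1) : ℝ) - (q:ℝ)^(k+1)| :=
        div_le_self (abs_nonneg _) hfact
    _ ≤ ((k:ℝ)+1) * ((k:ℝ)+2) * ((q:ℝ) + ((k:ℝ)+2))^k := by
        convert hest using 2 <;> push_cast <;> ring

/-- For `d ≥ 2` pairwise coprime positive integers `a 0, …, a (d-1)` with product `P`,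
the denumerant `T` satisfies `|T x - (P^(d-2)/(d-1)!)·⌊x/P⌋^(d-1)| ≤ C·(x+1)^(d-2)`
for some real constant `C`. -/
theorem denumerant_main_term (d : ℕ) (hd : 2 ≤ d) (a : Fin d → ℕ) (ha : ∀ i, 0 < a i)
    (hcop : ∀ i j, i ≠ j → Nat.Coprime (a i) (a j))
    (T : ℕ → ℕ) (hT : ∀ x, T x = {f : Fin d → ℕ | ∑ i, f i * a i = x}.ncard)
    (P : ℕ) (hP : P = ∏ i, a i) :
    ∃ C : ℝ, ∀ x : ℕ,
      |(T x : ℝ) - (P : ℝ) ^ (d - 2) / (Nat.factorial (d - 1)) * (x / P : ℕ) ^ (d - 1)| ≤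
        C * (x + 1 : ℝ) ^ (d - 2) := by
  classical
  obtain ⟨k, rfl⟩ : ∃ k, d = k + 2 := ⟨d - 2, by omega⟩
  simp only [show k + 2 - 1 = k + 1 from by omega, show k + 2 - 2 = k from by omega]
  have hPpos : 0 < P := hP ▸ Finset.prod_pos (fun i _ => ha i)
  set b : Fin (k+2) → ℕ := fun i => ∏ j ∈ Finset.univ.erase i, a j with hbdef
  have hab : ∀ i, a i * b i = P := fun i => by
    rw [hbdef, hP]; exact Finset.mul_prod_erase _ _ (Finset.mem_univ i)
  have hbpos : ∀ i, 0 < b i := fun i => Finset.prod_pos (fun j _ => ha j)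
  have e22 : k + 2 - 2 = k := by omega
  have e21 : k + 2 - 1 = k + 1 := by omega
  have hbprod : ∏ i, b i = P ^ (k + 2 - 1) := by
    have h1 : P * ∏ i, b i = P ^ (k+2) := by
      calc P * ∏ i, b i = (∏ i, a i) * ∏ i, b i := by rw [hP]
        _ = ∏ i, (a i * b i) := (Finset.prod_mul_distrib).symm
        _ = ∏ _i : Fin (k+2), P := Finset.prod_congr rfl (fun i _ => hab i)
        _ = P ^ (k+2) := by
            rw [Finset.prod_const, Finset.card_univ, Fintype.card_fin]
    rw [e21]
    have h2 : P ^ (k+2) = P * P ^ (k+1) := by ring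
    exact Nat.eq_of_mul_eq_mul_left hPpos (by rw [← h2]; exact h1)
  have hcop01 : Nat.Coprime (a ⟨0, by omega⟩) (a ⟨1, by omega⟩) :=
    hcop _ _ (by simp [Fin.ext_iff])
  clear_value b
  clear hbdef
  have hTcard : ∀ x : ℕ, T x = ((Fintype.piFinset fun _ : Fin (k+2) => Finset.range (x+1)).filter
      (fun f => ∑ i, f i * a i = x)).card := by
    intro x
    rw [hT x]
    have hset : {f : Fin (k+2) → ℕ | ∑ i, f i * a i = x}
        = ↑((Fintype.piFinset fun _ : Fin (k+2) => Finset.range (x+1)).filter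
          (fun f => ∑ i, f i * a i = x)) := by
      ext f
      simp only [Set.mem_setOf_eq, Finset.coe_filter, Finset.mem_coe, Finset.mem_filter,
        Fintype.mem_piFinset, Finset.mem_range, Set.mem_setOf_eq]
      constructor
      · intro h
        refine ⟨fun i => ?_, h⟩
        have h1 : f i ≤ f i * a i := le_mul_of_one_le_right (Nat.zero_le _) (ha i)
        have h2 : f i * a i ≤ x :=
          h ▸ Finset.single_le_sum (f := fun j => f j * a j)
            (fun j _ => Nat.zero_le _) (Finset.mem_univ i)
        omega
      · exact fun h => h.2
    rw [hset, Set.ncard_coe_finset]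
  set C1 : ℝ := (((k:ℝ)+2)*P)^2 + (P:ℝ)^k * ((k:ℝ)+2)^(k+1) with hC1def
  set C2 : ℝ := (P:ℝ)^k * (((k:ℝ)+1) * ((k:ℝ)+2) * ((k:ℝ)+2)^k) with hC2def
  have hC1pos : 0 ≤ C1 := by positivity
  have hC2pos : 0 ≤ C2 := by positivity
  refine ⟨C1 + C2, fun x => ?_⟩
  have hxp : (0:ℝ) ≤ ((x:ℝ)+1)^k := by positivity
  by_cases hbig : (k+2) * P ≤ x
  · -- main case
    set q := x / P with hqdef
    set F := (Fintype.piFinset fun i => Finset.range (b i)).filter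
        (fun y => (∑ i, y i * a i) % P = x % P) with hFdef
    clear_value q F
    have hFcard : F.card = P ^ k := by
      have h := fiber_card (k+2) hd a b P hPpos hab hcop01 hbprod x
      rw [e22] at h
      rw [hFdef]
      exact h
    have hTsum : T x = ∑ y ∈ F, ((k+2) + (x - ∑ i, y i * a i) / P - 1).choose
        ((x - ∑ i, y i * a i) / P) := by
      rw [hTcard x, hFdef]
      exact count_decompose (k+2) (Nat.le_of_lt hd) a b P hPpos ha hbpos hab x hbig
    -- per-y estimates
    have hq : k + 2 ≤ q := by
      rw [hqdef]; exact (Nat.le_div_iff_mul_le hPpos).mpr hbig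
    have hqx : q ≤ x := by
      rw [hqdef]; exact Nat.div_le_self _ _
    have hpery : ∀ y ∈ F, |((((k+2) + (x - ∑ i, y i * a i) / P - 1).choose
          ((x - ∑ i, y i * a i) / P) : ℕ) : ℝ) - (q:ℝ)^(k+1) / (Nat.factorial (k+1))|
        ≤ ((k:ℝ)+1) * ((k:ℝ)+2) * ((q:ℝ) + ((k:ℝ)+2))^k := by
      intro y hy
      rw [hFdef, Finset.mem_filter, Fintype.mem_piFinset] at hy
      set m := (x - ∑ i, y i * a i) / P with hmdef
      clear_value m
      have hsyP : (∑ i, y i * a i) ≤ (k+2) * P := by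
        calc (∑ i, y i * a i) ≤ ∑ i, b i * a i := by
              refine Finset.sum_le_sum (fun i _ => Nat.mul_le_mul_right _ ?_)
              exact le_of_lt (Finset.mem_range.mp (hy.1 i))
          _ = ∑ _i : Fin (k+2), P := Finset.sum_congr rfl (fun i _ => by rw [← hab i]; ring)
          _ = (k+2) * P := by simp [Finset.card_univ]
      have hsyx : (∑ i, y i * a i) ≤ x := le_trans hsyP hbig
      have hm : m ≤ q := by
        rw [hmdef, hqdef]
        exact Nat.div_le_div_right (Nat.sub_le x _)
      have hqm : q ≤ m + k + 2 := by
        have h5 : (x - P * (k+2)) / P ≤ m := by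
          rw [hmdef]
          exact Nat.div_le_div_right (Nat.sub_le_sub_left (by rw [Nat.mul_comm]; exact hsyP) x)
        have h6 : (x - P * (k+2)) / P = x / P - (k+2) :=
          Nat.sub_mul_div x P (k+2)
        rw [h6, ← hqdef] at h5
        rw [Nat.add_assoc]
        exact Nat.sub_le_iff_le_add.mp h5
      have hchoose : ((k+2) + m - 1).choose m = (m + (k+1)).choose (k+1) := by
        have h1 : (k+2) + m - 1 = m + (k+1) := by rw [Nat.add_comm]; rfl
        rw [h1]
        have h2 := Nat.choose_symm (n := m + (k+1)) (k := k+1) (Nat.le_add_left _ _)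
        have h3 : m + (k+1) - (k+1) = m := by simp
        rw [h3] at h2
        exact h2
      rw [hchoose]
      exact choose_est k m q hm hqm
    -- assemble
    have hmain : (P : ℝ) ^ k / (Nat.factorial (k+1)) * (q:ℝ) ^ (k+1)
        = ∑ _y ∈ F, (q:ℝ)^(k+1) / (Nat.factorial (k+1)) := by
      rw [Finset.sum_const, hFcard, nsmul_eq_mul]
      push_cast
      ring
    rw [hTsum, hmain]
    push_cast [Nat.cast_sum]
    rw [← Finset.sum_sub_distrib]
    calc |∑ y ∈ F, ((((k+2) + (x - ∑ i, y i * a i) / P - 1).choose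
            ((x - ∑ i, y i * a i) / P) : ℝ) - (q:ℝ)^(k+1) / (Nat.factorial (k+1)))|
        ≤ ∑ y ∈ F, |(((k+2) + (x - ∑ i, y i * a i) / P - 1).choose
            ((x - ∑ i, y i * a i) / P) : ℝ) - (q:ℝ)^(k+1) / (Nat.factorial (k+1))| :=
          Finset.abs_sum_le_sum_abs _ _
      _ ≤ ∑ _y ∈ F, ((k:ℝ)+1) * ((k:ℝ)+2) * ((q:ℝ) + ((k:ℝ)+2))^k :=
          Finset.sum_le_sum hpery
      _ = (P:ℝ)^k * (((k:ℝ)+1) * ((k:ℝ)+2) * ((q:ℝ) + ((k:ℝ)+2))^k) := by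
          rw [Finset.sum_const, hFcard, nsmul_eq_mul]
          push_cast
          ring
      _ ≤ C2 * ((x:ℝ)+1)^k := by
          rw [hC2def]
          have hqx' : (q:ℝ) ≤ (x:ℝ) := Nat.cast_le.mpr hqx
          have hxx : (0:ℝ) ≤ (x:ℝ) := Nat.cast_nonneg _
          have hbound : ((q:ℝ) + ((k:ℝ)+2))^k ≤ (((k:ℝ)+2) * ((x:ℝ)+1))^k := by
            apply pow_le_pow_left₀ (by positivity)
            nlinarith [Nat.cast_nonneg (α := ℝ) k]
          calc (P:ℝ)^k * (((k:ℝ)+1) * ((k:ℝ)+2) * ((q:ℝ) + ((k:ℝ)+2))^k)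
              ≤ (P:ℝ)^k * (((k:ℝ)+1) * ((k:ℝ)+2) * ((((k:ℝ)+2) * ((x:ℝ)+1))^k)) := by
                have h0 : (0:ℝ) ≤ (P:ℝ)^k := by positivity
                have h1 : (0:ℝ) ≤ ((k:ℝ)+1) * ((k:ℝ)+2) := by positivity
                exact mul_le_mul_of_nonneg_left (mul_le_mul_of_nonneg_left hbound h1) h0
            _ = (P:ℝ)^k * (((k:ℝ)+1) * ((k:ℝ)+2) * ((k:ℝ)+2)^k) * ((x:ℝ)+1)^k := by
                rw [mul_pow]; ring
      _ ≤ (C1 + C2) * ((x:ℝ)+1)^k :=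
          mul_le_mul_of_nonneg_right (le_add_of_nonneg_left hC1pos) hxp
  · -- small case
    push_neg at hbig
    have hTle : (T x : ℝ) ≤ ((x:ℝ)+1)^(k+2) := by
      rw [hTcard x]
      have h1 : ((Fintype.piFinset fun _ : Fin (k+2) => Finset.range (x+1)).filter
          (fun f => ∑ i, f i * a i = x)).card
          ≤ ((x+1)^(k+2) : ℕ) := by
        calc _ ≤ (Fintype.piFinset fun _ : Fin (k+2) => Finset.range (x+1)).card :=
              Finset.card_filter_le _ _
          _ = (x+1)^(k+2) := by
              rw [Fintype.card_piFinset]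
              simp
      exact_mod_cast h1
    have hTnn : (0:ℝ) ≤ (T x : ℝ) := Nat.cast_nonneg _
    have hx1 : (x:ℝ) + 1 ≤ ((k:ℝ)+2) * P := by
      have : (x:ℕ) + 1 ≤ (k+2) * P := hbig
      exact_mod_cast this
    have hq : (x / P : ℕ) ≤ k + 1 :=
      Nat.lt_succ_iff.mp ((Nat.div_lt_iff_lt_mul hPpos).mpr hbig)
    have hMle : (P : ℝ) ^ k / (Nat.factorial (k+1)) * ((x / P : ℕ):ℝ) ^ (k+1)
        ≤ (P:ℝ)^k * ((k:ℝ)+2)^(k+1) := by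
      have h1 : ((x / P : ℕ):ℝ) ≤ (k:ℝ)+2 := by
        have : ((x / P : ℕ):ℝ) ≤ ((k:ℝ)+1) := by exact_mod_cast hq
        linarith
      have h2 : ((x / P : ℕ):ℝ) ^ (k+1) ≤ ((k:ℝ)+2)^(k+1) :=
        pow_le_pow_left₀ (Nat.cast_nonneg _) h1 _
      have h3 : (1:ℝ) ≤ (Nat.factorial (k+1) : ℝ) := by
        exact_mod_cast Nat.one_le_iff_ne_zero.mpr (Nat.factorial_ne_zero _)
      exact mul_le_mul (div_le_self (by positivity) h3) h2 (by positivity) (by positivity)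
    have hMnn : (0:ℝ) ≤ (P : ℝ) ^ k / (Nat.factorial (k+1)) * ((x / P : ℕ):ℝ) ^ (k+1) := by
      positivity
    have hone : (1:ℝ) ≤ ((x:ℝ)+1)^k := by
      have hx0 : (0:ℝ) ≤ (x:ℝ) := Nat.cast_nonneg _
      calc (1:ℝ) = 1^k := (one_pow k).symm
        _ ≤ ((x:ℝ)+1)^k := pow_le_pow_left₀ (by norm_num) (by linarith) k
    have hTle2 : (T x : ℝ) ≤ (((k:ℝ)+2)*P)^2 * ((x:ℝ)+1)^k := by
      have : ((x:ℝ)+1)^(k+2) = ((x:ℝ)+1)^2 * ((x:ℝ)+1)^k := by ring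
      rw [this] at hTle
      have h4 : ((x:ℝ)+1)^2 ≤ (((k:ℝ)+2)*P)^2 := by
        apply pow_le_pow_left₀ (by positivity) hx1
      nlinarith [hxp]
    have hMle2 : (P : ℝ) ^ k / (Nat.factorial (k+1)) * ((x / P : ℕ):ℝ) ^ (k+1)
        ≤ (P:ℝ)^k * ((k:ℝ)+2)^(k+1) * ((x:ℝ)+1)^k := by
      calc _ ≤ (P:ℝ)^k * ((k:ℝ)+2)^(k+1) := hMle
        _ ≤ (P:ℝ)^k * ((k:ℝ)+2)^(k+1) * ((x:ℝ)+1)^k := by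
          nlinarith [hone, mul_nonneg (pow_nonneg (Nat.cast_nonneg (α := ℝ) P) k)
            (pow_nonneg (by positivity : (0:ℝ) ≤ (k:ℝ)+2) (k+1))]
    have habs : |(T x : ℝ) - (P : ℝ) ^ k / (Nat.factorial (k+1)) * ((x / P : ℕ):ℝ) ^ (k+1)|
        ≤ (T x : ℝ) + (P : ℝ) ^ k / (Nat.factorial (k+1)) * ((x / P : ℕ):ℝ) ^ (k+1) := by
      rw [abs_le]
      constructor <;> linarith
    calc |(T x : ℝ) - (P : ℝ) ^ k / (Nat.factorial (k+1)) * ((x / P : ℕ):ℝ) ^ (k+1)|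
        ≤ (T x : ℝ) + (P : ℝ) ^ k / (Nat.factorial (k+1)) * ((x / P : ℕ):ℝ) ^ (k+1) := habs
      _ ≤ (((k:ℝ)+2)*P)^2 * ((x:ℝ)+1)^k + (P:ℝ)^k * ((k:ℝ)+2)^(k+1) * ((x:ℝ)+1)^k :=
          add_le_add hTle2 hMle2
      _ = C1 * ((x:ℝ)+1)^k := by rw [hC1def]; ring
      _ ≤ (C1 + C2) * ((x:ℝ)+1)^k :=
          mul_le_mul_of_nonneg_right (le_add_of_nonneg_right hC2pos) hxp
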